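/- arXiv:2311.12215 — 3 statements merged into one kernel-verified Lean document; each statement's English description precedes it below -/
import Mathlib

section
/- A sequence (a₁,...,a_n) of nonnegative integers is the bump sequence of some permutation in S_n if and only if it is a weak ballot sequence, i.e., for all nonnegative integers i < j and all k ≤ n, the number of indices ℓ ≤ k with a_ℓ = i is at least the number of indices ℓ ≤ k with a_ℓ = j. -/
/-- Insert `k` into a (weakly increasing) row; return the new row and the bumped entry, if any. -/
def rowInsert : List ℕ → ℕ → List ℕ × Option ℕ
  | [], k => ([k], none)
  | x :: xs, k =>
      if k < x then (k :: xs, some x)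
      else
        let r := rowInsert xs k
        (x :: r.1, r.2)

/-- RS insertion of `k` into a tableau (list of rows); returns the new tableau
and the number of bumps caused by this insertion. -/
def tabInsert : List (List ℕ) → ℕ → List (List ℕ) × ℕ
  | [], k => ([[k]], 0)
  | r :: rs, k =>
      match rowInsert r k with
      | (r', none) => (r' :: rs, 0)
      | (r', some y) =>
          let t := tabInsert rs y
          (r' :: t.1, t.2 + 1)

/-- The RS insertion tableau `P` of a word together with the total number of bumps. -/
def rsAux (w : List ℕ) : List (List ℕ) × ℕ :=
  w.foldl (fun p k => let t := tabInsert p.1 k; (t.1, p.2 + t.2)) ([], 0)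

/-- The total number of bumps occurring when the RS algorithm is applied to the word `w`. -/
def bumpCount (w : List ℕ) : ℕ := (rsAux w).2

/-- The shape of the RS insertion tableau of `w`, as the list of row lengths. -/
def rsShape (w : List ℕ) : List ℕ := ((rsAux w).1).map List.length

/-- The bump sequence: the number of bumps caused by each successive insertion. -/
def bumpSeq (w : List ℕ) : List ℕ :=
  (w.foldl (fun (p : List (List ℕ) × List ℕ) k =>
    let t := tabInsert p.1 k; (t.1, p.2 ++ [t.2])) ([], [])).2

/-- The one-line word (with values in `{1,…,n}`) of a permutation of `Fin n`. -/
def ofPerm {n : ℕ} (π : Equiv.Perm (Fin n)) : List ℕ :=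
  List.ofFn (fun i => (π i : ℕ) + 1)

/-- A weak ballot sequence: at every prefix, each smaller value has occurred at least
as often as each larger value. -/
def IsWeakBallot (a : List ℕ) : Prop :=
  ∀ i j k : ℕ, i < j → k ≤ a.length →
    (a.take k).count j ≤ (a.take k).count i


namespace RSK

/-- default-0 indexing helpers -/
lemma sorted_getD_mono {l : List ℕ} (hs : l.Pairwise (· ≤ ·)) {i j : ℕ}
    (hij : i ≤ j) (hj : j < l.length) : l.getD i 0 ≤ l.getD j 0 := by
  rcases eq_or_lt_of_le hij with rfl | hlt
  · exact le_refl _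
  · rw [List.getD_eq_getElem _ _ (lt_trans hlt hj), List.getD_eq_getElem _ _ hj]
    exact List.pairwise_iff_getElem.mp hs i j _ _ hlt

lemma sorted_getD_strict {l : List ℕ} (hs : l.Pairwise (· ≤ ·)) (hn : l.Nodup) {i j : ℕ}
    (hij : i < j) (hj : j < l.length) : l.getD i 0 < l.getD j 0 := by
  rw [List.getD_eq_getElem _ _ (lt_trans hij hj), List.getD_eq_getElem _ _ hj]
  rcases lt_or_eq_of_le (List.pairwise_iff_getElem.mp hs i j _ _ hij) with h | h
  · exact h
  · exact absurd h (List.pairwise_iff_getElem.mp hn i j _ _ hij)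

lemma sorted_set {R : List ℕ} {q y : ℕ} (hs : R.Pairwise (· ≤ ·))
    (h1 : ∀ j < q, R.getD j 0 ≤ y) (h2 : ∀ j, q < j → j < R.length → y ≤ R.getD j 0) :
    (R.set q y).Pairwise (· ≤ ·) := by
  rw [List.pairwise_iff_getElem]
  intro i j hi hj hij
  rw [List.length_set] at hi hj
  rw [List.getElem_set, List.getElem_set]
  split_ifs with h h' h'
  · omega
  · -- i = q, j ≠ q : y ≤ R[j]
    have := h2 j (h ▸ hij) hj
    rwa [List.getD_eq_getElem _ _ hj] at this
  · have := h1 i (h' ▸ hij)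
    rwa [List.getD_eq_getElem _ _ hi] at this
  · exact List.pairwise_iff_getElem.mp hs i j hi hj hij

end RSK

namespace RSK

/-! ### rowInsert lemmas -/

lemma rowInsert_of_le {R : List ℕ} {k : ℕ} (h : ∀ x ∈ R, x ≤ k) :
    rowInsert R k = (R ++ [k], none) := by
  induction R with
  | nil => rfl
  | cons x xs ih =>
      have hx : ¬ k < x := not_lt.2 (h x (List.mem_cons_self))
      simp [rowInsert, if_neg hx, ih (fun z hz => h z (List.mem_cons_of_mem _ hz))]

lemma rowInsert_of_pos {R : List ℕ} {k p : ℕ} (hp : p < R.length)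
    (h1 : ∀ q < p, R.getD q 0 ≤ k) (h2 : k < R.getD p 0) :
    rowInsert R k = (R.set p k, some (R.getD p 0)) := by
  induction R generalizing p with
  | nil => simp at hp
  | cons x xs ih =>
      cases p with
      | zero =>
          simp only [List.getD_cons_zero] at h2
          simp [rowInsert, h2]
      | succ p =>
          have hx : ¬ k < x := not_lt.2 (by simpa using h1 0 (Nat.succ_pos _))
          have := ih (p := p) (by simpa using hp)
            (fun q hq => by simpa using h1 (q+1) (by omega))
            (by simpa using h2)
          simp [rowInsert, if_neg hx, this]

lemma rowInsert_spec (R : List ℕ) (k : ℕ) :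
    (rowInsert R k = (R ++ [k], none) ∧ ∀ x ∈ R, x ≤ k) ∨
    (∃ p, p < R.length ∧ rowInsert R k = (R.set p k, some (R.getD p 0)) ∧
      k < R.getD p 0 ∧ ∀ q < p, R.getD q 0 ≤ k) := by
  induction R with
  | nil => left; simp [rowInsert]
  | cons x xs ih =>
      by_cases hx : k < x
      · right
        exact ⟨0, by simp, by simp [rowInsert, hx], by simpa using hx, by omega⟩
      · rcases ih with ⟨he, hall⟩ | ⟨p, hp, he, hk, hq⟩
        · left
          constructor
          · simp [rowInsert, if_neg hx, he]
          · intro z hz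
            rcases List.mem_cons.1 hz with rfl | hz
            · omega
            · exact hall z hz
        · right
          refine ⟨p + 1, by simpa using hp, ?_, by simpa using hk, ?_⟩
          · simp [rowInsert, if_neg hx, he]
          · intro q hq'
            cases q with
            | zero => simpa using not_lt.1 hx
            | succ q => simpa using hq q (by omega)

end RSK

namespace RSK

/-! ### tableau notions -/

def shD (T : List (List ℕ)) (s : ℕ) : ℕ := (T.map List.length).getD s 0

@[simp] lemma shD_nil (s : ℕ) : shD [] s = 0 := rfl
@[simp] lemma shD_cons_zero (R : List ℕ) (rs : List (List ℕ)) :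
    shD (R :: rs) 0 = R.length := rfl
@[simp] lemma shD_cons_succ (R : List ℕ) (rs : List (List ℕ)) (s : ℕ) :
    shD (R :: rs) (s+1) = shD rs s := rfl

lemma shD_eq (T : List (List ℕ)) (s : ℕ) : shD T s = (T.getD s []).length := by
  rcases lt_or_ge s T.length with h | h
  · rw [shD, List.getD_eq_getElem _ _ (by simpa using h), List.getD_eq_getElem _ _ h,
      List.getElem_map]
  · rw [shD, List.getD_eq_default _ _ (by simpa using h), List.getD_eq_default _ _ h]
    rfl

def Dominates (R R' : List ℕ) : Prop :=
  R'.length ≤ R.length ∧ ∀ i < R'.length, R.getD i 0 < R'.getD i 0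

def ValidTab (T : List (List ℕ)) : Prop :=
  (∀ R ∈ T, R ≠ [] ∧ R.Pairwise (· ≤ ·)) ∧ ∀ n, Dominates (T.getD n []) (T.getD (n+1) [])

lemma getD_zero_headD {α : Type*} (rs : List α) (d : α) : rs.getD 0 d = rs.headD d := by
  cases rs <;> rfl

lemma dominates_nil (R : List ℕ) : Dominates R [] := ⟨Nat.zero_le _, by simp⟩

lemma validTab_nil : ValidTab [] := ⟨by simp, fun n => dominates_nil _⟩

lemma validTab_cons {R : List ℕ} {rs : List (List ℕ)} :
    ValidTab (R :: rs) ↔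
      (R ≠ [] ∧ R.Pairwise (· ≤ ·)) ∧ Dominates R (rs.headD []) ∧ ValidTab rs := by
  constructor
  · rintro ⟨h1, h2⟩
    refine ⟨h1 R (List.mem_cons_self), ?_, fun S hS => h1 S (List.mem_cons_of_mem _ hS),
      fun n => ?_⟩
    · have := h2 0
      cases rs <;> simpa using this
    · have := h2 (n+1)
      simpa using this
  · rintro ⟨hR, hdom, h1, h2⟩
    refine ⟨fun S hS => ?_, fun n => ?_⟩
    · rcases List.mem_cons.1 hS with rfl | hS
      · exact hR
      · exact h1 S hS
    · cases n with
      | zero => cases rs <;> simpa using hdom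
      | succ n => simpa using h2 n

lemma ValidTab.shD_anti {T : List (List ℕ)} (hT : ValidTab T) :
    ∀ {i j : ℕ}, i ≤ j → shD T j ≤ shD T i := by
  have step : ∀ s : ℕ, shD T (s+1) ≤ shD T s := fun s => by
    rw [shD_eq, shD_eq]; exact (hT.2 s).1
  intro i j hij
  induction j with
  | zero => simpa [Nat.le_zero.1 hij]
  | succ j ih =>
      rcases Nat.lt_or_ge i (j+1) with h | h
      · exact le_trans (step j) (ih (by omega))
      · have : i = j + 1 := by omega
        simp [this]

def entriesM (T : List (List ℕ)) : Multiset ℕ := (T.flatten : List ℕ)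

@[simp] lemma entriesM_nil : entriesM [] = 0 := rfl

@[simp] lemma entriesM_cons (R : List ℕ) (rs : List (List ℕ)) :
    entriesM (R :: rs) = (R : Multiset ℕ) + entriesM rs := by
  simp [entriesM, List.flatten_cons]

lemma multiset_set {R : List ℕ} {q y : ℕ} (hq : q < R.length) :
    ((R.set q y : List ℕ) : Multiset ℕ) + {R.getD q 0} = (R : Multiset ℕ) + {y} := by
  induction R generalizing q with
  | nil => simp at hq
  | cons x xs ih =>
      cases q with
      | zero =>
          simp only [List.set_cons_zero, List.getD_cons_zero, ← Multiset.cons_coe,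
            Multiset.cons_add]
          simp only [← Multiset.singleton_add]
          abel
      | succ q =>
          have h2 := ih (q := q) (by simpa using hq)
          rw [List.set_cons_succ, List.getD_cons_succ, ← Multiset.cons_coe, ← Multiset.cons_coe,
            Multiset.cons_add, Multiset.cons_add, h2]

/-! ### tabInsert computation lemmas -/

lemma tabInsert_cons_none {R R' : List ℕ} {k : ℕ} (h : rowInsert R k = (R', none))
    (rs : List (List ℕ)) : tabInsert (R :: rs) k = (R' :: rs, 0) := by
  unfold tabInsert
  rw [h]

lemma tabInsert_cons_some {R R' : List ℕ} {k y : ℕ} (h : rowInsert R k = (R', some y))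
    (rs : List (List ℕ)) :
    tabInsert (R :: rs) k = (R' :: (tabInsert rs y).1, (tabInsert rs y).2 + 1) := by
  conv_lhs => unfold tabInsert
  rw [h]

end RSK

namespace RSK

lemma getD_set {l : List ℕ} {p i y : ℕ} (hi : i < l.length) :
    (l.set p y).getD i 0 = if p = i then y else l.getD i 0 := by
  rw [List.getD_eq_getElem _ _ (by simpa using hi), List.getElem_set]
  split_ifs with h
  · rfl
  · rw [List.getD_eq_getElem _ _ hi]

theorem tabInsert_spec (T : List (List ℕ)) (k : ℕ) (hT : ValidTab T) :
    ValidTab (tabInsert T k).1 ∧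
    (∀ s, shD (tabInsert T k).1 s = shD T s + if s = (tabInsert T k).2 then 1 else 0) ∧
    entriesM (tabInsert T k).1 = k ::ₘ entriesM T ∧
    ∃ p, p ≤ (T.headD []).length ∧ p < ((tabInsert T k).1.headD []).length ∧
      ((tabInsert T k).1.headD []).getD p 0 = k ∧
      (∀ q < p, (T.headD []).getD q 0 ≤ k) ∧
      (∀ i < ((tabInsert T k).1.headD []).length, i ≠ p →
        ((tabInsert T k).1.headD []).getD i 0 = (T.headD []).getD i 0) ∧
      (((tabInsert T k).1.headD []).length ≤ (T.headD []).length ∨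
        ((tabInsert T k).1.headD []).length = p + 1) := by
  induction T generalizing k with
  | nil =>
      refine ⟨validTab_cons.2 ⟨⟨by simp, by simp⟩, dominates_nil _, validTab_nil⟩,
        fun s => by cases s <;> simp [tabInsert], by simp [tabInsert], 0, ?_⟩
      simp [tabInsert]
  | cons R rs ih =>
      obtain ⟨⟨hRne, hRs⟩, hdom, hvrs⟩ := validTab_cons.1 hT
      rcases rowInsert_spec R k with ⟨he, hall⟩ | ⟨p, hp, he, hkp, hqs⟩
      · -- no bump: k appended to first row
        rw [tabInsert_cons_none he rs]
        have hall' : ∀ q < R.length, R.getD q 0 ≤ k := fun q hq => by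
          rw [List.getD_eq_getElem _ _ hq]; exact hall _ (List.getElem_mem hq)
        refine ⟨?_, ?_, ?_, R.length, ?_⟩
        · refine validTab_cons.2 ⟨⟨by simp, ?_⟩, ⟨le_trans hdom.1 (by simp), fun i hi => ?_⟩, hvrs⟩
          · exact List.pairwise_append.2 ⟨hRs, by simp, by simpa using hall⟩
          · rw [List.getD_append _ _ _ _ (lt_of_lt_of_le hi hdom.1)]
            exact hdom.2 i hi
        · intro s; cases s <;> simp
        · simp only [entriesM_cons, ← Multiset.coe_add, ← Multiset.singleton_add]
          rw [show (([k] : List ℕ) : Multiset ℕ) = {k} from rfl]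
          abel
        · refine ⟨le_refl _, by simp, ?_, hall', fun i hi hip => ?_, Or.inr (by simp)⟩
          · simp [List.getD_append_right]
          · simp only [List.headD_cons]
            have : i < R.length := by simp at hi; omega
            rw [List.getD_append _ _ _ _ this]
      · -- bump case
        rw [tabInsert_cons_some he rs]
        obtain ⟨ihV, ihSh, ihE, p₂, hp₂le, hp₂lt, hp₂k, hp₂q, hp₂other, hp₂len⟩ :=
          ih (R.getD p 0) hvrs
        have hp2p : p₂ ≤ p := by
          by_contra hc
          push_neg at hc
          have h1 : (rs.headD []).getD p 0 ≤ R.getD p 0 := hp₂q p hc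
          have h2 : R.getD p 0 < (rs.headD []).getD p 0 := hdom.2 p (lt_of_lt_of_le hc hp₂le)
          omega
        have hlen2 : ((tabInsert rs (R.getD p 0)).1.headD []).length ≤ R.length := by
          rcases hp₂len with h | h
          · exact le_trans h hdom.1
          · omega
        have hsorted' : (R.set p k).Pairwise (· ≤ ·) := by
          refine sorted_set hRs hqs (fun j hj hjl => ?_)
          exact le_trans hkp.le (sorted_getD_mono hRs hj.le hjl)
        refine ⟨?_, ?_, ?_, p, hp.le, ?_, ?_, hqs, ?_, Or.inl (by simp)⟩
        · refine validTab_cons.2 ⟨⟨?_, hsorted'⟩,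
            ⟨by rw [List.length_set]; exact hlen2, fun i hi => ?_⟩, ihV⟩
          · exact List.ne_nil_of_length_pos
              (by rw [List.length_set]; exact List.length_pos_iff.2 hRne)
          · have hiR : i < R.length := lt_of_lt_of_le hi hlen2
            rw [getD_set hiR]
            by_cases hip : i = p₂
            · subst hip
              rw [hp₂k]
              split_ifs with h
              · exact hkp
              · have hlt : i < p := by omega
                have := hqs i hlt
                omega
            · have hH2i : ((tabInsert rs (R.getD p 0)).1.headD []).getD i 0
                  = (rs.headD []).getD i 0 := hp₂other i hi hip
              have hiH' : i < (rs.headD []).length := by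
                rcases hp₂len with h | h <;> omega
              have hcol := hdom.2 i hiH'
              rw [hH2i]
              split_ifs with h
              · subst h; omega
              · exact hcol
        · intro s
          cases s with
          | zero => simp [List.length_set]
          | succ s =>
              have := ihSh s
              simp only [shD_cons_succ]
              simpa using this
        · simp only [entriesM_cons, ihE]
          have hms := multiset_set (y := k) hp
          calc ((R.set p k : List ℕ) : Multiset ℕ) + (R.getD p 0 ::ₘ entriesM rs)
              = (↑(R.set p k) + {R.getD p 0}) + entriesM rs := by
                rw [← Multiset.singleton_add]; abel
            _ = (↑R + {k}) + entriesM rs := by rw [hms]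
            _ = k ::ₘ (↑R + entriesM rs) := by rw [← Multiset.singleton_add]; abel
        · simpa [List.length_set] using hp
        · rw [List.headD_cons, getD_set hp, if_pos rfl]
        · intro i hi hip
          simp only [List.headD_cons] at hi ⊢
          have hiR : i < R.length := by simpa [List.length_set] using hi
          rw [getD_set hiR, if_neg (fun h => hip h.symm)]

end RSK

namespace RSK

def rsT : List (List ℕ) → List ℕ → List (List ℕ)
  | T, [] => T
  | T, k :: ks => rsT (tabInsert T k).1 ks

def bumpL : List (List ℕ) → List ℕ → List ℕ
  | _, [] => []
  | T, k :: ks => (tabInsert T k).2 :: bumpL (tabInsert T k).1 ks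

@[simp] lemma rsT_nil (T : List (List ℕ)) : rsT T [] = T := rfl
@[simp] lemma rsT_cons (T : List (List ℕ)) (k : ℕ) (ks : List ℕ) :
    rsT T (k :: ks) = rsT (tabInsert T k).1 ks := rfl
@[simp] lemma bumpL_nil (T : List (List ℕ)) : bumpL T [] = [] := rfl
@[simp] lemma bumpL_cons (T : List (List ℕ)) (k : ℕ) (ks : List ℕ) :
    bumpL T (k :: ks) = (tabInsert T k).2 :: bumpL (tabInsert T k).1 ks := rfl

lemma foldl_eq (w : List ℕ) : ∀ (T : List (List ℕ)) (l : List ℕ),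
    (w.foldl (fun (p : List (List ℕ) × List ℕ) k =>
      let t := tabInsert p.1 k; (t.1, p.2 ++ [t.2])) (T, l)) = (rsT T w, l ++ bumpL T w) := by
  induction w with
  | nil => intro T l; simp
  | cons k ks ih =>
      intro T l
      simp only [List.foldl_cons, ih, rsT_cons, bumpL_cons]
      simp

lemma bumpSeq_eq_bumpL (w : List ℕ) : bumpSeq w = bumpL [] w := by
  rw [bumpSeq, foldl_eq]
  simp

lemma rsT_append (T : List (List ℕ)) (u v : List ℕ) :
    rsT T (u ++ v) = rsT (rsT T u) v := by
  induction u generalizing T with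
  | nil => simp
  | cons k ks ih => simp [ih]

lemma bumpL_append (T : List (List ℕ)) (u v : List ℕ) :
    bumpL T (u ++ v) = bumpL T u ++ bumpL (rsT T u) v := by
  induction u generalizing T with
  | nil => simp
  | cons k ks ih => simp [ih]

@[simp] lemma bumpL_length (T : List (List ℕ)) (w : List ℕ) :
    (bumpL T w).length = w.length := by
  induction w generalizing T with
  | nil => rfl
  | cons k ks ih => simp [ih]

lemma bumpL_take (T : List (List ℕ)) (w : List ℕ) (m : ℕ) :
    (bumpL T w).take m = bumpL T (w.take m) := by
  rcases le_or_gt w.length m with h | h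
  · rw [List.take_of_length_le (by simp [h]), List.take_of_length_le h]
  · conv_lhs => rw [← List.take_append_drop m w]
    rw [bumpL_append, List.take_append_of_le_length (by simp; omega)]
    rw [List.take_of_length_le (by simp)]

lemma validTab_rsT {T : List (List ℕ)} (hT : ValidTab T) (w : List ℕ) :
    ValidTab (rsT T w) := by
  induction w generalizing T with
  | nil => exact hT
  | cons k ks ih => exact ih ((tabInsert_spec T k hT).1)

lemma count_bumpL {T : List (List ℕ)} (hT : ValidTab T) (w : List ℕ) (r : ℕ) :
    (bumpL T w).count r + shD T r = shD (rsT T w) r := by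
  induction w generalizing T with
  | nil => simp
  | cons k ks ih =>
      have hspec := tabInsert_spec T k hT
      have h1 := ih (T := (tabInsert T k).1) hspec.1
      have h2 := hspec.2.1 r
      simp only [bumpL_cons, rsT_cons, List.count_cons]
      rw [← h1, h2]
      by_cases hr : r = (tabInsert T k).2 <;> simp [hr] <;> omega

theorem isWeakBallot_bumpL (w : List ℕ) : IsWeakBallot (bumpL [] w) := by
  intro i j m hij hm
  rw [bumpL_take]
  have h1 := count_bumpL validTab_nil (w.take m) j
  have h2 := count_bumpL validTab_nil (w.take m) i
  have h3 := (validTab_rsT validTab_nil (w.take m)).shD_anti hij.le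
  simp only [shD_nil, add_zero] at h1 h2
  omega

end RSK

namespace RSK

def rowUnbump : List ℕ → ℕ → List ℕ × ℕ
  | [], _ => ([], 0)
  | [x], y => ([y], x)
  | x :: x' :: xs, y =>
      if x' < y then
        let r := rowUnbump (x' :: xs) y
        (x :: r.1, r.2)
      else (y :: x' :: xs, x)

lemma rowUnbump_spec : ∀ (R : List ℕ) (y : ℕ), R ≠ [] → R.Pairwise (· ≤ ·) →
    R.getD 0 0 < y →
    ∃ q < R.length, rowUnbump R y = (R.set q y, R.getD q 0) ∧
      (∀ j ≤ q, R.getD j 0 < y) ∧ (∀ j, q < j → j < R.length → y ≤ R.getD j 0)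
  | [], y, hne, _, _ => absurd rfl hne
  | [x], y, _, _, hy => by
      refine ⟨0, by simp, by simp [rowUnbump], fun j hj => ?_, fun j h1 h2 => by simp at h2; omega⟩
      interval_cases j
      simpa using hy
  | x :: x' :: xs, y, _, hs, hy => by
      by_cases hx' : x' < y
      · obtain ⟨q, hq, he, h1, h2⟩ := rowUnbump_spec (x' :: xs) y (by simp)
          (hs.sublist (by simp)) (by simpa using hx')
        refine ⟨q + 1, by simpa using hq, ?_, ?_, ?_⟩
        · simp only [rowUnbump, if_pos hx', he, List.set_cons_succ, List.getD_cons_succ]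
        · intro j hj
          cases j with
          | zero => simpa using hy
          | succ j => simpa using h1 j (by omega)
        · intro j hj hjl
          cases j with
          | zero => omega
          | succ j => simpa using h2 j (by omega) (by simpa using hjl)
      · refine ⟨0, by simp, by simp [rowUnbump, if_neg hx'], fun j hj => ?_, fun j hj hjl => ?_⟩
        · interval_cases j
          simpa using hy
        · cases j with
          | zero => omega
          | succ j =>
              have h3 : (x' :: xs).getD 0 0 ≤ (x' :: xs).getD j 0 :=
                sorted_getD_mono (hs.sublist (by simp)) (Nat.zero_le j) (by simpa using hjl)
              simp only [List.getD_cons_succ, List.getD_cons_zero] at h3 ⊢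
              omega

def tabUnbump : List (List ℕ) → ℕ → List (List ℕ) × ℕ
  | [], _ => ([], 0)
  | R :: rs, 0 => (if R.length ≤ 1 then rs else R.dropLast :: rs, R.getD (R.length - 1) 0)
  | R :: rs, r+1 =>
      let u := tabUnbump rs r
      let v := rowUnbump R u.2
      (v.1 :: u.1, v.2)

end RSK

namespace RSK

lemma set_getD_self {l : List ℕ} {n : ℕ} (h : n < l.length) :
    l.set n (l.getD n 0) = l := by
  rw [List.getD_eq_getElem _ _ h]
  apply List.ext_getElem
  · simp
  · intro i h1 h2
    rw [List.getElem_set]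
    split <;> simp_all

lemma getD_dropLast {l : List ℕ} {i : ℕ} (h : i < l.length - 1) :
    l.dropLast.getD i 0 = l.getD i 0 := by
  have h1 : i < l.dropLast.length := by simp [List.length_dropLast]; omega
  rw [List.getD_eq_getElem _ _ h1, List.getD_eq_getElem _ _ (by simp at h1 ⊢; omega),
    List.getElem_dropLast]

theorem tabUnbump_spec : ∀ (r : ℕ) (T : List (List ℕ)), ValidTab T →
    (entriesM T).Nodup → shD T (r+1) < shD T r →
    ∃ T' v, tabUnbump T r = (T', v) ∧ tabInsert T' v = (T, r) ∧ ValidTab T' ∧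
      entriesM T = v ::ₘ entriesM T' ∧
      (∃ q < (T.headD []).length, v = (T.headD []).getD q 0 ∧
        (q < (T'.headD []).length → (T.headD []).getD q 0 < (T'.headD []).getD q 0)) ∧
      (T'.headD []).length ≤ (T.headD []).length ∧
      (∀ i < (T'.headD []).length, (T.headD []).getD i 0 ≤ (T'.headD []).getD i 0) := by
  intro r
  induction r with
  | zero =>
      rintro (_ | ⟨R, rs⟩) hT hnd hc
      · simp at hc
      obtain ⟨⟨hRne, hRs⟩, hdom, hvrs⟩ := validTab_cons.1 hT
      have hc' : (rs.headD []).length < R.length := by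
        have := hc
        rw [shD_cons_succ, shD_eq, getD_zero_headD] at this
        simpa using this
      by_cases hR1 : R.length ≤ 1
      · -- single-cell first row, rs must be []
        have hR1' : R.length = 1 := by
          have := List.length_pos_iff.2 hRne; omega
        obtain ⟨a, rfl⟩ := List.length_eq_one_iff.1 hR1'
        have hrs : rs = [] := by
          cases rs with
          | nil => rfl
          | cons S ss =>
              exfalso
              have hS : S ≠ [] := (validTab_cons.1 hvrs).1.1
              have h0 : 0 < S.length := List.length_pos_iff.2 hS
              have hlen : S.length < 1 := hc'
              omega
        subst hrs
        refine ⟨[], a, by simp [tabUnbump], by simp [tabInsert], validTab_nil, by simp, ?_, by simp, by simp⟩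
        exact ⟨0, by simp, by simp, by simp⟩
      · push_neg at hR1
        have hvne : R.length - 1 < R.length := by omega
        have hre : R.dropLast ++ [R.getD (R.length - 1) 0] = R := by
          rw [List.getD_eq_getElem _ _ hvne, ← List.getLast_eq_getElem hRne,
            List.dropLast_append_getLast]
        refine ⟨R.dropLast :: rs, R.getD (R.length - 1) 0,
          by unfold tabUnbump; rw [if_neg (by omega)], ?_, ?_, ?_, ?_, ?_, ?_⟩
        · -- tabInsert back
          have hins : rowInsert R.dropLast (R.getD (R.length - 1) 0)
              = (R.dropLast ++ [R.getD (R.length - 1) 0], none) := by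
            refine rowInsert_of_le (fun x hx => ?_)
            obtain ⟨j, hj, rfl⟩ := List.mem_iff_getElem.1 hx
            have hj' : j < R.length - 1 := by simpa using hj
            have := sorted_getD_mono hRs (by omega : j ≤ R.length - 1) hvne
            rw [List.getD_eq_getElem _ _ (by omega)] at this
            rw [List.getElem_dropLast]
            omega
          rw [tabInsert_cons_none (by rw [hins, hre]) rs]
        · refine validTab_cons.2 ⟨⟨?_, hRs.sublist (List.dropLast_sublist R)⟩,
            ⟨by rw [List.length_dropLast]; omega, fun i hi => ?_⟩, hvrs⟩
          · refine List.ne_nil_of_length_pos ?_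
            rw [List.length_dropLast]; omega
          · rw [getD_dropLast (by omega)]
            exact hdom.2 i hi
        · rw [entriesM_cons, entriesM_cons]
          conv_lhs => rw [← hre]
          rw [← Multiset.coe_add, ← Multiset.singleton_add]
          rw [show ((([R.getD (R.length - 1) 0] : List ℕ)) : Multiset ℕ)
            = {R.getD (R.length - 1) 0} from rfl]
          abel
        · refine ⟨R.length - 1, by simpa using hvne, by simp, fun hq => ?_⟩
          simp [List.length_dropLast] at hq
        · simp [List.length_dropLast]
        · intro i hi
          simp only [List.headD_cons] at hi ⊢
          rw [getD_dropLast (by simpa [List.length_dropLast] using hi)]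
  | succ r ih =>
      rintro (_ | ⟨R, rs⟩) hT hnd hc
      · simp at hc
      obtain ⟨⟨hRne, hRs⟩, hdom, hvrs⟩ := validTab_cons.1 hT
      rw [shD_cons_succ, shD_cons_succ] at hc
      rw [entriesM_cons, Multiset.nodup_add] at hnd
      obtain ⟨hndR, hndrs, hdisj⟩ := hnd
      obtain ⟨rs', y, heq, hins, hV', hE', ⟨q₀, hq₀, hyq₀, hstrict⟩, hlen', hpt'⟩ :=
        ih rs hvrs hndrs hc
      have hq₀R : q₀ < R.length := lt_of_lt_of_le hq₀ hdom.1
      have hy : R.getD 0 0 < y := by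
        have h1 := sorted_getD_mono hRs (Nat.zero_le q₀) hq₀R
        have h2 := hdom.2 q₀ hq₀
        omega
      obtain ⟨q, hqR, heq2, h1, h2⟩ := rowUnbump_spec R y hRne hRs hy
      have hqq₀ : q₀ ≤ q := by
        by_contra hcon
        push_neg at hcon
        have := h2 q₀ hcon hq₀R
        have := hdom.2 q₀ hq₀
        omega
      have hqy : R.getD q 0 < y := h1 q le_rfl
      have hu : tabUnbump (R :: rs) (r+1) = ((R.set q y) :: rs', R.getD q 0) := by
        simp only [tabUnbump, heq, heq2]
      refine ⟨(R.set q y) :: rs', R.getD q 0, hu, ?_, ?_, ?_, ?_, ?_, ?_⟩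
      · -- tabInsert inverse
        have hrow : rowInsert (R.set q y) (R.getD q 0) = (R, some y) := by
          have hv : rowInsert (R.set q y) (R.getD q 0)
              = ((R.set q y).set q (R.getD q 0), some ((R.set q y).getD q 0)) := by
            refine rowInsert_of_pos (by simpa using hqR) (fun j hj => ?_) ?_
            · rw [getD_set (by omega), if_neg (by omega)]
              exact sorted_getD_mono hRs hj.le hqR
            · rw [getD_set hqR, if_pos rfl]
              exact hqy
          rw [hv, List.set_set, set_getD_self hqR, getD_set hqR, if_pos rfl]
        rw [tabInsert_cons_some hrow rs', hins]
      · -- validity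
        refine validTab_cons.2 ⟨⟨?_, sorted_set hRs (fun j hj => (h1 j hj.le).le) h2⟩,
          ⟨by rw [List.length_set]; exact le_trans hlen' hdom.1, fun i hi => ?_⟩, hV'⟩
        · exact List.ne_nil_of_length_pos (by rw [List.length_set]; exact List.length_pos_iff.2 hRne)
        · have hiH' : i < (rs.headD []).length := lt_of_lt_of_le hi hlen'
          have hiR : i < R.length := lt_of_lt_of_le hiH' hdom.1
          rw [getD_set hiR]
          split_ifs with hqi
          · -- i = q : need y < rs'.head q
            subst hqi
            rcases eq_or_lt_of_le hqq₀ with rfl | hlt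
            · have := hstrict hi
              omega
            · -- q₀ < q
              have hH'sorted : (rs.headD []).Pairwise (· ≤ ·) := by
                cases rs with
                | nil => simp
                | cons S ss => exact ((validTab_cons.1 hvrs).1).2
              have hH'nodup : (rs.headD []).Nodup := by
                cases rs with
                | nil => simp
                | cons S ss =>
                    rw [entriesM_cons, Multiset.nodup_add] at hndrs
                    exact Multiset.coe_nodup.1 hndrs.1
              have := sorted_getD_strict hH'sorted hH'nodup hlt hiH'
              have := hpt' q hi
              omega
          · have := hdom.2 i hiH'
            have := hpt' i hi
            omega
      · -- entries
        rw [entriesM_cons, entriesM_cons, hE']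
        have hms := multiset_set (y := y) hqR
        calc (R : Multiset ℕ) + (y ::ₘ entriesM rs')
            = ((R : Multiset ℕ) + {y}) + entriesM rs' := by
              rw [← Multiset.singleton_add]; abel
          _ = (↑(R.set q y) + {R.getD q 0}) + entriesM rs' := by rw [hms]
          _ = R.getD q 0 ::ₘ (↑(R.set q y) + entriesM rs') := by
              rw [← Multiset.singleton_add]; abel
      · refine ⟨q, hqR, rfl, fun hq => ?_⟩
        have hv : ((R.set q y :: rs').headD []).getD q 0 = y := by
          rw [List.headD_cons, getD_set hqR, if_pos rfl]
        rw [hv]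
        exact hqy
      · simp [List.length_set]
      · intro i hi
        simp only [List.headD_cons, List.length_set] at hi ⊢
        rw [getD_set hi]
        split_ifs with hqi
        · subst hqi; exact hqy.le
        · exact le_rfl

end RSK

namespace RSK

/-! ### superstandard tableau -/

def superStd : List ℕ → ℕ → List (List ℕ)
  | [], _ => []
  | l :: ls, s => (List.range' (s+1) l) :: superStd ls (s + l)

lemma superStd_shape : ∀ (lam : List ℕ) (s : ℕ) (r : ℕ),
    shD (superStd lam s) r = lam.getD r 0
  | [], s, r => by simp [superStd]
  | l :: ls, s, 0 => by simp [superStd]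
  | l :: ls, s, r+1 => by
      simp only [superStd, shD_cons_succ, List.getD_cons_succ]
      exact superStd_shape ls (s+l) r

lemma superStd_entries : ∀ (lam : List ℕ) (s : ℕ),
    entriesM (superStd lam s) = (List.range' (s+1) lam.sum : List ℕ)
  | [], s => by simp [superStd]
  | l :: ls, s => by
      simp only [superStd, entriesM_cons, superStd_entries ls (s+l), List.sum_cons,
        Multiset.coe_add]
      congr 1
      have h := List.range'_append (s := s+1) (m := l) (n := ls.sum) (step := 1)
      simp only [one_mul] at h
      rw [show s + l + 1 = s + 1 + l by omega, h]

lemma superStd_valid : ∀ (lam : List ℕ) (s : ℕ),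
    (∀ x ∈ lam, 0 < x) → List.Chain' (fun a b => b ≤ a) lam →
    ValidTab (superStd lam s)
  | [], s, _, _ => validTab_nil
  | l :: ls, s, hpos, hch => by
      rw [superStd, validTab_cons]
      have hlpos : 0 < l := hpos l (List.mem_cons_self)
      refine ⟨⟨?_, ?_⟩, ?_, superStd_valid ls (s+l) (fun x hx => hpos x (List.mem_cons_of_mem _ hx)) hch.tail⟩
      · have : (List.range' (s+1) l).length = l := by simp
        exact List.ne_nil_of_length_pos (by omega)
      · exact List.Pairwise.imp le_of_lt List.pairwise_lt_range'
      · -- Dominates over head of superStd ls (s+l)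
        cases ls with
        | nil => exact dominates_nil _
        | cons l₂ ls₂ =>
            have hl₂ : l₂ ≤ l := (List.isChain_cons_cons.1 hch).1
            constructor
            · simp only [superStd, List.headD_cons, List.length_range']
              exact hl₂
            · intro i hi
              simp only [superStd, List.headD_cons, List.length_range'] at hi
              simp only [superStd, List.headD_cons]
              rw [List.getD_eq_getElem _ _ (by simpa using lt_of_lt_of_le hi hl₂),
                List.getD_eq_getElem _ _ (by simpa using hi),
                List.getElem_range', List.getElem_range']
              omega

/-! ### max value -/

def mval (a : List ℕ) : ℕ := a.foldr (fun x n => max (x+1) n) 0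

lemma lt_mval : ∀ (a : List ℕ), ∀ x ∈ a, x < mval a
  | x :: xs, z, hz => by
      rcases List.mem_cons.1 hz with rfl | hz
      · simp only [mval, List.foldr_cons]
        omega
      · have := lt_mval xs z hz
        simp only [mval, List.foldr_cons] at *
        omega

lemma mval_mem : ∀ (a : List ℕ), 0 < mval a → (mval a - 1) ∈ a
  | [], h => by simp [mval] at h
  | x :: xs, h => by
      have hm : mval (x :: xs) = max (x+1) (mval xs) := rfl
      rcases le_or_gt (mval xs) (x+1) with hle | hlt
      · have hx : mval (x :: xs) = x + 1 := by rw [hm, max_eq_left hle]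
        rw [hx]
        simp
      · have h1 : mval (x :: xs) = mval xs := by rw [hm, max_eq_right hlt.le]
        rw [h1]
        exact List.mem_cons_of_mem _ (mval_mem xs (by omega))

lemma sum_count_eq_length (a : List ℕ) (m : ℕ) (h : ∀ x ∈ a, x < m) :
    ∑ r ∈ Finset.range m, a.count r = a.length := by
  induction a with
  | nil => simp
  | cons x xs ih =>
      have hx : x ∈ Finset.range m := Finset.mem_range.2 (h x (List.mem_cons_self))
      have ihs := ih (fun z hz => h z (List.mem_cons_of_mem _ hz))
      simp only [List.count_cons, List.length_cons]
      rw [Finset.sum_add_distrib, ihs]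
      congr 1
      simp only [beq_iff_eq]
      rw [Finset.sum_ite_eq (Finset.range m) x (fun _ => 1), if_pos hx]

end RSK

namespace RSK

def peel : List (List ℕ) → List ℕ → List ℕ
  | _, [] => []
  | T, r :: rest =>
      let u := tabUnbump T r
      peel u.1 rest ++ [u.2]

lemma peel_spec : ∀ (rl : List ℕ) (T : List (List ℕ)), ValidTab T → (entriesM T).Nodup →
    (∀ s, shD T s = rl.reverse.count s) → IsWeakBallot rl.reverse →
    bumpL [] (peel T rl) = rl.reverse ∧ rsT [] (peel T rl) = T ∧
      ((peel T rl : List ℕ) : Multiset ℕ) = entriesM T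
  | [], T, hT, hnd, hsh, hb => by
      have hTnil : T = [] := by
        cases T with
        | nil => rfl
        | cons R rs =>
            exfalso
            have h0 := hsh 0
            simp only [List.reverse_nil, List.count_nil, shD_cons_zero] at h0
            have := List.length_pos_iff.2 ((validTab_cons.1 hT).1.1)
            omega
      subst hTnil
      exact ⟨rfl, rfl, rfl⟩
  | r :: rest, T, hT, hnd, hsh, hb => by
      have hrev : (r :: rest).reverse = rest.reverse ++ [r] := by simp
      have hcount : ∀ s, (r :: rest).reverse.count s
          = rest.reverse.count s + if s = r then 1 else 0 := by
        intro s
        rw [hrev, List.count_append, List.count_singleton]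
        simp only [beq_iff_eq]
        by_cases h : s = r
        · simp [h]
        · simp [h, Ne.symm h]
      -- ballot for the shorter list
      have hbrest : IsWeakBallot rest.reverse := by
        intro i j k hij hk
        have hk' : k ≤ (r :: rest).reverse.length := by
          simp only [List.length_reverse, List.length_cons] at hk ⊢
          omega
        have := hb i j k hij hk'
        rwa [hrev, List.take_append_of_le_length hk] at this
      -- the corner condition
      have hcorner : shD T (r+1) < shD T r := by
        have h1 := hsh r
        have h2 := hsh (r+1)
        have h3 := hb r (r+1) rest.reverse.length (by omega)
          (by rw [hrev]; simp)
        rw [hrev, List.take_append_of_le_length le_rfl, List.take_length] at h3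
        rw [hcount r, if_pos rfl] at h1
        rw [hcount (r+1), if_neg (by omega)] at h2
        omega
      obtain ⟨T', v, heq, hins, hV', hE', _, _, _⟩ := tabUnbump_spec r T hT hnd hcorner
      have hsh' : ∀ s, shD T' s = rest.reverse.count s := by
        intro s
        have hfwd := (tabInsert_spec T' v hV').2.1 s
        rw [hins] at hfwd
        simp only at hfwd
        have h1 := hsh s
        rw [hcount s] at h1
        by_cases hs : s = r
        · rw [if_pos hs] at h1 hfwd
          omega
        · rw [if_neg hs] at h1 hfwd
          omega
      have hnd' : (entriesM T').Nodup := by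
        rw [hE'] at hnd
        exact (Multiset.nodup_cons.1 hnd).2
      obtain ⟨ih1, ih2, ih3⟩ := peel_spec rest T' hV' hnd' hsh' hbrest
      have hpeel : peel T (r :: rest) = peel T' rest ++ [v] := by
        simp [peel, heq]
      refine ⟨?_, ?_, ?_⟩
      · rw [hpeel, bumpL_append, ih1, ih2, hrev]
        congr 1
        simp [hins]
      · rw [hpeel, rsT_append, ih2]
        simp [hins]
      · rw [hpeel, hE', ← Multiset.coe_add, ih3,
          show (([v] : List ℕ) : Multiset ℕ) = {v} from rfl, ← Multiset.singleton_add]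
        abel

end RSK

namespace RSK

lemma list_range_sum (f : ℕ → ℕ) : ∀ m : ℕ,
    ((List.range m).map f).sum = ∑ r ∈ Finset.range m, f r
  | 0 => by simp
  | m+1 => by
      rw [List.range_succ, Finset.sum_range_succ, List.map_append, List.sum_append,
        list_range_sum f m]
      simp

theorem main (n : ℕ) (a : List ℕ) (ha : a.length = n) :
    (∃ π : Equiv.Perm (Fin n), bumpSeq (ofPerm π) = a) ↔ IsWeakBallot a := by
  constructor
  · rintro ⟨π, rfl⟩
    rw [bumpSeq_eq_bumpL]
    exact isWeakBallot_bumpL _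
  · intro hb
    have hfull : ∀ i j : ℕ, i < j → a.count j ≤ a.count i := by
      intro i j hij
      have := hb i j a.length hij le_rfl
      rwa [List.take_length] at this
    have hlt : ∀ x ∈ a, x < mval a := lt_mval a
    have hlamlen : ((List.range (mval a)).map (a.count ·)).length = mval a := by simp
    have hlamget : ∀ r < mval a,
        ((List.range (mval a)).map (a.count ·)).getD r 0 = a.count r := by
      intro r hr
      rw [List.getD_eq_getElem _ _ (by simpa using hr)]
      simp
    have hpos : ∀ x ∈ (List.range (mval a)).map (a.count ·), 0 < x := by
      intro x hx
      obtain ⟨r, hr, rfl⟩ := List.mem_map.1 hx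
      rw [List.mem_range] at hr
      have hmem := mval_mem a (by omega)
      have h1 : 0 < a.count (mval a - 1) := List.count_pos_iff.2 hmem
      rcases eq_or_lt_of_le (by omega : r ≤ mval a - 1) with rfl | hlt'
      · exact h1
      · exact lt_of_lt_of_le h1 (hfull r (mval a - 1) hlt')
    have hchain : List.Chain' (fun x y => y ≤ x) ((List.range (mval a)).map (a.count ·)) := by
      rw [List.Chain', List.isChain_iff_pairwise, List.pairwise_iff_getElem]
      intro i j hi hj hij
      simp only [List.getElem_map, List.getElem_range]
      exact hfull i j hij
    have hvalid : ValidTab (superStd ((List.range (mval a)).map (a.count ·)) 0) :=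
      superStd_valid _ 0 hpos hchain
    have hsum : ((List.range (mval a)).map (a.count ·)).sum = n := by
      rw [list_range_sum, sum_count_eq_length a (mval a) hlt, ha]
    have hsh : ∀ s, shD (superStd ((List.range (mval a)).map (a.count ·)) 0) s = a.count s := by
      intro s
      rw [superStd_shape]
      rcases lt_or_ge s (mval a) with h | h
      · exact hlamget s h
      · rw [List.getD_eq_default _ _ (by simpa using h), eq_comm, List.count_eq_zero]
        intro hs
        exact absurd (hlt s hs) (by omega)
    have hent : entriesM (superStd ((List.range (mval a)).map (a.count ·)) 0)
        = ((List.range' 1 n : List ℕ) : Multiset ℕ) := by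
      rw [superStd_entries, hsum]
    have hnd : (entriesM (superStd ((List.range (mval a)).map (a.count ·)) 0)).Nodup := by
      rw [hent]
      exact Multiset.coe_nodup.2 List.nodup_range'
    obtain ⟨hb1, hb2, hb3⟩ := peel_spec a.reverse _ hvalid hnd
      (fun s => by rw [List.reverse_reverse]; exact hsh s)
      (by rw [List.reverse_reverse]; exact hb)
    rw [List.reverse_reverse] at hb1
    set w := peel (superStd ((List.range (mval a)).map (a.count ·)) 0) a.reverse with hw
    have hperm : w.Perm (List.range' 1 n) := Multiset.coe_eq_coe.1 (by rw [hb3, hent])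
    have hlw : w.length = n := by
      have := congrArg List.length hb1
      rw [bumpL_length] at this
      rw [this, ha]
    have hwvals : ∀ x ∈ w, 1 ≤ x ∧ x < n + 1 := by
      intro x hx
      have := hperm.mem_iff.1 hx
      rw [List.mem_range'] at this
      obtain ⟨i, hi, rfl⟩ := this
      omega
    have hnodupw : w.Nodup := hperm.nodup_iff.2 List.nodup_range'
    have hgetlt : ∀ i : Fin n, (i : ℕ) < w.length := fun i => by rw [hlw]; exact i.isLt
    have hget : ∀ i : Fin n, 1 ≤ w[(i : ℕ)]'(hgetlt i) ∧ w[(i : ℕ)]'(hgetlt i) < n + 1 :=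
      fun i => hwvals _ (List.getElem_mem _)
    let f : Fin n → Fin n := fun i => ⟨w[(i : ℕ)]'(hgetlt i) - 1, by
      have := hget i; omega⟩
    have hinj : Function.Injective f := by
      intro i j hij
      have h1 := hget i
      have h2 := hget j
      have h3 : w[(i : ℕ)]'(hgetlt i) - 1 = w[(j : ℕ)]'(hgetlt j) - 1 := congrArg Fin.val hij
      have h4 : w[(i : ℕ)]'(hgetlt i) = w[(j : ℕ)]'(hgetlt j) := by omega
      have h5 : (i : ℕ) = (j : ℕ) := (List.Nodup.getElem_inj_iff hnodupw).1 h4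
      exact Fin.ext h5
    let π : Equiv.Perm (Fin n) := Equiv.ofBijective f (Finite.injective_iff_bijective.1 hinj)
    refine ⟨π, ?_⟩
    have hof : ofPerm π = w := by
      apply List.ext_getElem
      · simp [ofPerm, hlw]
      · intro i h1 h2
        simp only [ofPerm, List.getElem_ofFn]
        have hπ : π ⟨i, by simpa [ofPerm] using h1⟩ = f ⟨i, by simpa [ofPerm] using h1⟩ := rfl
        have hfv : ∀ j : Fin n, (f j : ℕ) = w[(j : ℕ)]'(hgetlt j) - 1 := fun j => rfl
        rw [hπ, hfv]
        simp only [Fin.val_mk]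
        have h5 := hwvals (w[i]'h2) (List.getElem_mem h2)
        omega
    rw [hof, bumpSeq_eq_bumpL, hb1]

end RSK


/-- A sequence of `n` nonnegative integers is the bump sequence of some
permutation in `S_n` if and only if it is a weak ballot sequence. -/
theorem bumpSeq_iff_weakBallot (n : ℕ) (a : List ℕ) (ha : a.length = n) :
    (∃ π : Equiv.Perm (Fin n), bumpSeq (ofPerm π) = a) ↔ IsWeakBallot a := RSK.main n a ha
end

section
/- For fixed n, the sequence a_k = (n!/(k!·k!·(n−2k)!))² / C(n−k+1,k)², for 1 ≤ k ≤ n/2, is log-concave: a_k² ≥ a_{k−1}·a_{k+1} for all valid k. -/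
lemma aform (n k : ℕ) (h : 2 * k ≤ n) :
    (((n.factorial : ℚ) /
        ((k.factorial : ℚ) * (k.factorial : ℚ) * ((n - 2 * k).factorial : ℚ))) ^ 2) /
        (((n - k + 1).choose k : ℚ)) ^ 2
    = ((n.factorial : ℚ) ^ 2 * ((n - 2 * k + 1 : ℕ) : ℚ) ^ 2) /
      (((k.factorial : ℚ)) ^ 2 * (((n - k + 1).factorial : ℚ)) ^ 2) := by
  have hkle : k ≤ n - k + 1 := by omega
  rw [Nat.cast_choose ℚ hkle]
  have e1 : n - k + 1 - k = n - 2 * k + 1 := by omega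
  rw [e1]
  have e2 : (n - 2 * k + 1).factorial = (n - 2 * k + 1) * (n - 2 * k).factorial :=
    Nat.factorial_succ _
  rw [e2]
  have hf1 : ((k.factorial : ℚ)) ≠ 0 := Nat.cast_ne_zero.2 (Nat.factorial_ne_zero k)
  have hf2 : (((n - 2 * k).factorial : ℚ)) ≠ 0 := Nat.cast_ne_zero.2 (Nat.factorial_ne_zero _)
  have hf3 : (((n - k + 1).factorial : ℚ)) ≠ 0 := Nat.cast_ne_zero.2 (Nat.factorial_ne_zero _)
  push_cast
  field_simp

set_option maxHeartbeats 1000000 in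
/-- For fixed `n`, the sequence
`a_k = (n!/(k!·k!·(n-2k)!))² / C(n-k+1,k)²`, `1 ≤ k ≤ n/2`, is log-concave. -/
theorem twoRow_syt_squares_log_concave (n : ℕ)
    (a : ℕ → ℚ)
    (ha : ∀ k, a k = (((n.factorial : ℚ) /
        ((k.factorial : ℚ) * (k.factorial : ℚ) * ((n - 2 * k).factorial : ℚ))) ^ 2) /
        (((n - k + 1).choose k : ℚ)) ^ 2) :
    ∀ k : ℕ, 1 ≤ k - 1 → k + 1 ≤ n / 2 → a (k - 1) * a (k + 1) ≤ a k ^ 2 := by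
  intro k hk1 hk2
  obtain ⟨j, rfl⟩ : ∃ j, k = j + 2 := ⟨k - 2, by omega⟩
  obtain ⟨m, rfl⟩ : ∃ m, n = 2 * j + m + 6 := ⟨n - (2 * j + 6), by omega⟩
  have hk' : j + 2 - 1 = j + 1 := rfl
  rw [hk', ha (j + 1), ha (j + 2), ha (j + 3),
    aform _ _ (by omega : 2 * (j + 1) ≤ 2 * j + m + 6),
    aform _ _ (by omega : 2 * (j + 2) ≤ 2 * j + m + 6),
    aform _ _ (by omega : 2 * (j + 3) ≤ 2 * j + m + 6)]
  have s1 : 2 * j + m + 6 - 2 * (j + 1) + 1 = m + 5 := by omega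
  have s2 : 2 * j + m + 6 - 2 * (j + 2) + 1 = m + 3 := by omega
  have s3 : 2 * j + m + 6 - 2 * (j + 3) + 1 = m + 1 := by omega
  have t1 : 2 * j + m + 6 - (j + 1) + 1 = (j + m + 5) + 1 := by omega
  have t2 : 2 * j + m + 6 - (j + 2) + 1 = (j + m + 4) + 1 := by omega
  have t3 : 2 * j + m + 6 - (j + 3) + 1 = (j + m + 3) + 1 := by omega
  rw [s1, s2, s3, t1, t2, t3]
  -- express factorials in terms of base atoms
  have f1 : (((j + m + 5) + 1).factorial : ℚ)
      = ((j : ℚ) + m + 6) * ((j : ℚ) + m + 5) * (((j + m + 3) + 1).factorial : ℚ) := by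
    rw [Nat.factorial_succ, Nat.factorial_succ]
    push_cast; ring
  have f2 : (((j + m + 4) + 1).factorial : ℚ)
      = ((j : ℚ) + m + 5) * (((j + m + 3) + 1).factorial : ℚ) := by
    rw [Nat.factorial_succ]
    push_cast; ring
  have g2 : (((j + 2)).factorial : ℚ) = ((j : ℚ) + 2) * (((j + 1)).factorial : ℚ) := by
    rw [Nat.factorial_succ]; push_cast; ring
  have g3 : (((j + 3)).factorial : ℚ)
      = ((j : ℚ) + 3) * ((j : ℚ) + 2) * (((j + 1)).factorial : ℚ) := by
    rw [show j + 3 = (j + 2) + 1 from rfl, Nat.factorial_succ, Nat.factorial_succ]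
    push_cast; ring
  rw [f1, f2, g2, g3]
  set N : ℚ := ((2 * j + m + 6).factorial : ℚ) with hN
  set A : ℚ := ((j + 1).factorial : ℚ) with hA
  set S : ℚ := (((j + m + 3) + 1).factorial : ℚ) with hS
  have hNpos : 0 < N := by exact_mod_cast Nat.cast_pos.2 (Nat.factorial_pos _)
  have hApos : 0 < A := by exact_mod_cast Nat.cast_pos.2 (Nat.factorial_pos _)
  have hSpos : 0 < S := by exact_mod_cast Nat.cast_pos.2 (Nat.factorial_pos _)
  push_cast
  rw [div_mul_div_comm, div_pow, div_le_div_iff₀ (by positivity) (by positivity)]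
  have h1 : ((m : ℚ) + 5) * ((m : ℚ) + 1) ≤ ((m : ℚ) + 3) ^ 2 := by nlinarith
  have h1' : ((m : ℚ) + 5) ^ 2 * ((m : ℚ) + 1) ^ 2 ≤ ((m : ℚ) + 3) ^ 4 := by
    nlinarith [mul_le_mul h1 h1 (by positivity) (by positivity)]
  have h2 : ((j : ℚ) + 2) ^ 2 * ((j : ℚ) + m + 5) ^ 2
      ≤ ((j : ℚ) + 3) ^ 2 * ((j : ℚ) + m + 6) ^ 2 :=
    mul_le_mul (pow_le_pow_left₀ (by positivity) (by linarith) 2)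
      (pow_le_pow_left₀ (by positivity) (by linarith) 2) (by positivity) (by positivity)
  have key : (((m : ℚ) + 5) ^ 2 * ((m : ℚ) + 1) ^ 2) * (((j : ℚ) + 2) ^ 2 * ((j : ℚ) + m + 5) ^ 2)
      ≤ ((m : ℚ) + 3) ^ 4 * (((j : ℚ) + 3) ^ 2 * ((j : ℚ) + m + 6) ^ 2) := by
    exact mul_le_mul h1' h2 (by positivity) (by positivity)
  have hC : (0:ℚ) ≤ N ^ 4 * A ^ 4 * S ^ 4 * ((j : ℚ) + 2) ^ 2 * ((j : ℚ) + m + 5) ^ 2 := by positivity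
  have H := mul_le_mul_of_nonneg_left key hC
  linarith [H]
end

section
/- Let t_{n,i} be the number of partitions λ of n with Σⱼ(j−1)λⱼ = i. Then t_{n+j,n} ≤ t_{n+j+1,n} for all n,j ≥ 0, and for 0 ≤ i ≤ ⌊n/2⌋, t_{n,i} equals the coefficient of z^i in ∏_{k≥2} 1/(1 − z^{C(k,2)}) (in particular t_{n,i} is independent of n in this range). -/
/-- The parts of a partition of `n`, as a weakly decreasing list. -/
def partsList {n : ℕ} (p : n.Partition) : List ℕ :=
  (p.parts.sort (· ≤ ·)).reverse

/-- `bump` of a partition given by its weakly decreasing list of parts: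
`∑ᵢ (i-1)λᵢ` (0-indexed rows, so weight `i` for row `i`). -/
def bumpOfParts (l : List ℕ) : ℕ :=
  ∑ i ∈ Finset.range l.length, i * l.getD i 0

/-- `t n i`: the number of partitions `λ ⊢ n` with `∑ⱼ(j-1)λⱼ = i`. -/
noncomputable def tStat (n i : ℕ) : ℕ :=
  Nat.card {p : n.Partition // bumpOfParts (partsList p) = i}


lemma partsList_sorted {n : ℕ} (p : n.Partition) : (partsList p).Pairwise (· ≥ ·) := by
  rw [partsList, List.pairwise_reverse]
  exact p.parts.pairwise_sort (· ≤ ·)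

lemma partsList_coe {n : ℕ} (p : n.Partition) : (partsList p : Multiset ℕ) = p.parts := by
  rw [partsList, Multiset.coe_reverse, p.parts.sort_eq (· ≤ ·)]

lemma partsList_pos {n : ℕ} (p : n.Partition) : ∀ x ∈ partsList p, 0 < x := by
  intro x hx
  exact p.parts_pos (by rw [← partsList_coe p]; exact_mod_cast hx)

lemma partsList_sum {n : ℕ} (p : n.Partition) : (partsList p).sum = n := by
  have := congrArg Multiset.sum (partsList_coe p)
  simpa [p.parts_sum] using this

lemma partsList_inj {n : ℕ} {p q : n.Partition} (h : partsList p = partsList q) : p = q := by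
  ext1; rw [← partsList_coe p, ← partsList_coe q, h]

/-- A sorted-descending list with the right multiset is `partsList`. -/
lemma partsList_eq {n : ℕ} (p : n.Partition) (l : List ℕ) (hs : l.Pairwise (· ≥ ·))
    (hc : (l : Multiset ℕ) = p.parts) : partsList p = l := by
  apply List.Perm.eq_of_pairwise' (partsList_sorted p) hs ?_
  rw [← Multiset.coe_eq_coe, partsList_coe, hc]

lemma getD_pos_iff {l : List ℕ} (hl : ∀ x ∈ l, 0 < x) {j : ℕ} :
    0 < l.getD j 0 ↔ j < l.length := by
  constructor
  · intro h
    by_contra hj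
    rw [List.getD_eq_default _ _ (le_of_not_gt hj)] at h
    exact lt_irrefl 0 h
  · intro h
    exact hl _ (by rw [List.getD_eq_getElem _ _ h]; exact List.getElem_mem _)

lemma getD_antitone {l : List ℕ} (hs : l.Pairwise (· ≥ ·)) {j j' : ℕ} (h : j ≤ j') :
    l.getD j' 0 ≤ l.getD j 0 := by
  rcases eq_or_lt_of_le h with rfl | h
  · exact le_refl _
  by_cases hj' : j' < l.length
  · have hj : j < l.length := lt_trans h hj'
    rw [List.getD_eq_getElem _ _ hj', List.getD_eq_getElem _ _ hj]
    exact List.Pairwise.rel_get_of_lt hs (by simpa using h)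
  · rw [List.getD_eq_default _ _ (le_of_not_gt hj')]
    exact Nat.zero_le _

lemma list_ext_getD {l m : List ℕ} (hl : ∀ x ∈ l, 0 < x) (hm : ∀ x ∈ m, 0 < x)
    (h : ∀ j, l.getD j 0 = m.getD j 0) : l = m := by
  have hlen : l.length = m.length := by
    by_contra hne
    rcases Nat.lt_or_ge l.length m.length with hlt | hge
    · have := (getD_pos_iff hm).2 hlt
      rw [← h] at this
      rw [(getD_pos_iff hl)] at this
      exact absurd this (lt_irrefl _)
    · rcases lt_of_le_of_ne hge (Ne.symm hne) with hlt
      have := (getD_pos_iff hl).2 hlt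
      rw [h] at this
      rw [(getD_pos_iff hm)] at this
      exact absurd this (lt_irrefl _)
  apply List.ext_getElem hlen
  intro j h1 h2
  have := h j
  rwa [List.getD_eq_getElem _ _ h1, List.getD_eq_getElem _ _ h2] at this

lemma bumpOfParts_eq_sum {l : List ℕ} {N : ℕ} (hN : l.length ≤ N) :
    bumpOfParts l = ∑ j ∈ Finset.range N, j * l.getD j 0 := by
  rw [bumpOfParts]
  apply Finset.sum_subset (Finset.range_subset_range.2 hN)
  intro j _ hj
  rw [Finset.mem_range, not_lt] at hj
  rw [List.getD_eq_default _ _ (by omega)]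
  · ring

lemma term_le_bump {l : List ℕ} (j : ℕ) : j * l.getD j 0 ≤ bumpOfParts l := by
  by_cases hj : j < l.length
  · exact Finset.single_le_sum (f := fun i => i * l.getD i 0) (fun _ _ => Nat.zero_le _)
      (Finset.mem_range.2 hj)
  · rw [List.getD_eq_default _ _ (le_of_not_gt hj)]
    simp

lemma bump_cons (a b : ℕ) (t : List ℕ) : bumpOfParts (a :: t) = bumpOfParts (b :: t) := by
  rw [bumpOfParts, bumpOfParts]
  simp only [List.length_cons]
  rw [Finset.sum_range_succ', Finset.sum_range_succ']
  simp

/-- Adding one to the head of a partition. -/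
def succPart {m : ℕ} (p : m.Partition) : (m + 1).Partition where
  parts := ((partsList p).headD 0 + 1) ::ₘ ((partsList p).tail : Multiset ℕ)
  parts_pos := by
    intro i hi
    rw [Multiset.mem_cons] at hi
    rcases hi with rfl | hi
    · exact Nat.succ_pos _
    · exact partsList_pos p i (List.mem_of_mem_tail (by exact_mod_cast hi))
  parts_sum := by
    have : (partsList p).headD 0 + ((partsList p).tail).sum = (partsList p).sum := by
      cases partsList p <;> simp
    rw [partsList_sum p] at this
    simp only [Multiset.sum_cons, Multiset.sum_coe]
    omega

lemma partsList_succPart {m : ℕ} (p : m.Partition) :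
    partsList (succPart p) = ((partsList p).headD 0 + 1) :: (partsList p).tail := by
  apply partsList_eq
  · constructor
    · intro b hb
      have hble : b ≤ (partsList p).headD 0 := by
        cases h : partsList p with
        | nil => simp [h] at hb
        | cons a t =>
          rw [h] at hb; simp only [List.tail_cons] at hb
          have := partsList_sorted p
          rw [h] at this
          simpa [h] using List.rel_of_pairwise_cons this hb
      omega
    · cases h : partsList p with
      | nil => simp
      | cons a t =>
        have := partsList_sorted p
        rw [h] at this
        exact this.tail
  · simp [succPart]

lemma bump_succPart {m : ℕ} (p : m.Partition) :
    bumpOfParts (partsList (succPart p)) = bumpOfParts (partsList p) := by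
  rw [partsList_succPart]
  cases h : partsList p with
  | nil => simp [bumpOfParts]
  | cons a t => exact bump_cons _ a t

lemma succPart_inj {m : ℕ} : Function.Injective (succPart (m := m)) := by
  intro p q h
  apply partsList_inj
  have h2 := congrArg partsList h
  rw [partsList_succPart, partsList_succPart] at h2
  have hhead : (partsList p).headD 0 = (partsList q).headD 0 := by
    have := List.head_eq_of_cons_eq h2 ; omega
  have htail : (partsList p).tail = (partsList q).tail := List.tail_eq_of_cons_eq h2
  cases hp : partsList p with
  | nil =>
    cases hq : partsList q with
    | nil => rfl
    | cons a t =>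
      exfalso
      have : 0 < a := partsList_pos q a (by rw [hq]; exact List.mem_cons_self)
      rw [hp, hq] at hhead; simp at hhead; omega
  | cons a t =>
    cases hq : partsList q with
    | nil =>
      exfalso
      have : 0 < a := partsList_pos p a (by rw [hp]; exact List.mem_cons_self)
      rw [hp, hq] at hhead; simp at hhead; omega
    | cons b s =>
      rw [hp, hq] at hhead htail; simp at hhead htail
      rw [hhead, htail]

lemma part1 (n j : ℕ) : tStat (n + j) n ≤ tStat (n + j + 1) n := by
  apply Nat.card_le_card_of_injective
    (fun q : {p : (n+j).Partition // bumpOfParts (partsList p) = n} =>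
      (⟨succPart q.1, by rw [bump_succPart]; exact q.2⟩ :
        {p : (n+j+1).Partition // bumpOfParts (partsList p) = n}))
  intro a b hab
  exact Subtype.ext (succPart_inj (congrArg Subtype.val hab))

lemma sum_range_one_to (N : ℕ) (f : ℕ → ℕ) (h0 : f 0 = 0) :
    ∑ j ∈ Finset.range (N + 1), f j = ∑ j ∈ Finset.Icc 1 N, f j := by
  have : Finset.range (N + 1) = insert 0 (Finset.Icc 1 N) := by
    ext x; simp [Finset.mem_Icc, Finset.mem_range]; omega
  rw [this, Finset.sum_insert (by simp), h0, zero_add]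

lemma gauss (k : ℕ) : ∑ j ∈ Finset.Icc 1 (k - 1), j = k.choose 2 := by
  have h1 : ∑ j ∈ Finset.range k, j = ∑ j ∈ Finset.Icc 1 (k - 1), j := by
    cases k with
    | zero => simp
    | succ m => rw [sum_range_one_to m (fun j => j) rfl]; simp
  rw [← h1, Finset.sum_range_id, Nat.choose_two_right]

lemma swap_sum (i N : ℕ) (hN : i ≤ N) (d : ℕ → ℕ) :
    ∑ j ∈ Finset.Icc 1 N, j * (∑ k ∈ Finset.Icc (j + 1) (i + 1), d k)
      = ∑ k ∈ Finset.Icc 2 (i + 1), k.choose 2 * d k := by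
  have step1 : ∀ j ∈ Finset.Icc 1 N,
      j * (∑ k ∈ Finset.Icc (j + 1) (i + 1), d k)
        = ∑ k ∈ Finset.Icc 2 (i + 1), if j + 1 ≤ k then j * d k else 0 := by
    intro j hj
    rw [Finset.mem_Icc] at hj
    rw [← Finset.sum_filter]
    have : Finset.filter (fun k => j + 1 ≤ k) (Finset.Icc 2 (i + 1))
        = Finset.Icc (j + 1) (i + 1) := by
      ext x; simp [Finset.mem_Icc, Finset.mem_filter]; omega
    rw [this, Finset.mul_sum]
  rw [Finset.sum_congr rfl step1, Finset.sum_comm]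
  apply Finset.sum_congr rfl
  intro k hk
  rw [Finset.mem_Icc] at hk
  have : ∀ j, (if j + 1 ≤ k then j * d k else 0) = (if j + 1 ≤ k then j else 0) * d k := by
    intro j; split <;> simp
  simp only [this]
  rw [← Finset.sum_mul, ← Finset.sum_filter]
  have : Finset.filter (fun j => j + 1 ≤ k) (Finset.Icc 1 N) = Finset.Icc 1 (k - 1) := by
    ext x; simp [Finset.mem_Icc, Finset.mem_filter]; omega
  rw [this, gauss]

lemma telescope (f : ℕ → ℕ) (hf : ∀ k, f (k + 1) ≤ f k) (a : ℕ) :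
    ∀ b, a ≤ b → (∑ k ∈ Finset.Icc (a + 1) b, (f (k - 1) - f k)) + f b = f a := by
  intro b hab
  induction b, hab using Nat.le_induction with
  | base => simp
  | succ b hab ih =>
    have hins : Finset.Icc (a + 1) (b + 1) = insert (b + 1) (Finset.Icc (a + 1) b) := by
      ext x; simp [Finset.mem_Icc, Finset.mem_insert]; omega
    rw [hins, Finset.sum_insert (by simp [Finset.mem_Icc])]
    simp only [Nat.add_sub_cancel]
    have := hf b
    omega

lemma sum_eq_getD : ∀ (l : List ℕ) (N : ℕ), l.length ≤ N →
    l.sum = ∑ j ∈ Finset.range N, l.getD j 0 := by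
  intro l
  induction l with
  | nil => intro N _; simp
  | cons a t ih =>
    intro N hN
    cases N with
    | zero => simp at hN
    | succ M =>
      rw [Finset.sum_range_succ']
      simp only [List.getD_cons_succ, List.getD_cons_zero, List.sum_cons]
      rw [← ih M (by simpa using hN)]
      omega

def gFun (i : ℕ) (d : ℕ → ℕ) (j : ℕ) : ℕ := ∑ k ∈ Finset.Icc (j + 1) (i + 1), d k

lemma gFun_anti (i : ℕ) (d : ℕ → ℕ) {j j' : ℕ} (h : j ≤ j') : gFun i d j' ≤ gFun i d j := by
  apply Finset.sum_le_sum_of_subset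
  apply Finset.Icc_subset_Icc_left
  omega

lemma gFun_zero (i : ℕ) (d : ℕ → ℕ) {j : ℕ} (h : i < j) : gFun i d j = 0 := by
  rw [gFun, Finset.Icc_eq_empty (by omega), Finset.sum_empty]

lemma gFun_diff (i : ℕ) (d : ℕ → ℕ) {k : ℕ} (h2 : 2 ≤ k) (hk : k ≤ i + 1) :
    gFun i d (k - 1) = d k + gFun i d k := by
  have h1 : k - 1 + 1 = k := by omega
  rw [gFun, gFun, h1]
  have : Finset.Icc k (i + 1) = insert k (Finset.Icc (k + 1) (i + 1)) := by
    ext x; simp [Finset.mem_Icc]; omega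
  rw [this, Finset.sum_insert (by simp [Finset.mem_Icc])]

def dOf (i : ℕ) (lst : List ℕ) (k : ℕ) : ℕ :=
  if 2 ≤ k ∧ k ≤ i + 1 then lst.getD (k - 1) 0 - lst.getD k 0 else 0

lemma getD_succ_eq_zero {n i : ℕ} (p : n.Partition)
    (hb : bumpOfParts (partsList p) = i) : (partsList p).getD (i + 1) 0 = 0 := by
  have h := term_le_bump (l := partsList p) (i + 1)
  rw [hb] at h
  rcases Nat.eq_zero_or_pos ((partsList p).getD (i + 1) 0) with h0 | h0
  · exact h0
  · exfalso
    have := Nat.le_mul_of_pos_right (i + 1) h0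
    omega

lemma gFun_dOf {n i : ℕ} (p : n.Partition) (hb : bumpOfParts (partsList p) = i) :
    ∀ j, 1 ≤ j → gFun i (dOf i (partsList p)) j = (partsList p).getD j 0 := by
  intro j hj
  by_cases hji : j ≤ i + 1
  · have htel := telescope (fun k => (partsList p).getD k 0)
      (fun k => getD_antitone (partsList_sorted p) (Nat.le_succ k)) j (i + 1) hji
    beta_reduce at htel
    rw [getD_succ_eq_zero p hb] at htel
    rw [gFun, ← htel]
    simp only [Nat.add_zero]
    apply Finset.sum_congr rfl
    intro k hk
    rw [Finset.mem_Icc] at hk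
    rw [dOf, if_pos (by omega)]
  · rw [gFun_zero i _ (by omega)]
    have h1 : (partsList p).getD j 0 ≤ (partsList p).getD (i + 1) 0 :=
      getD_antitone (partsList_sorted p) (by omega)
    rw [getD_succ_eq_zero p hb] at h1
    omega

lemma bump_eq_Icc {n i : ℕ} (p : n.Partition) (hb : bumpOfParts (partsList p) = i) :
    ∑ j ∈ Finset.Icc 1 i, j * (partsList p).getD j 0 = i := by
  have hlen : (partsList p).length ≤ i + 1 := by
    by_contra h
    have := (getD_pos_iff (partsList_pos p) (j := i + 1)).2 (by omega)
    rw [getD_succ_eq_zero p hb] at this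
    omega
  have := bumpOfParts_eq_sum (l := partsList p) (N := i + 1) hlen
  rw [hb] at this
  rw [← sum_range_one_to i (fun j => j * (partsList p).getD j 0) (by simp), ← this]

lemma weight_dOf {n i : ℕ} (p : n.Partition) (hb : bumpOfParts (partsList p) = i) :
    ∑ k ∈ Finset.Icc 2 (i + 1), k.choose 2 * dOf i (partsList p) k = i := by
  rw [← swap_sum i i (le_refl i) (dOf i (partsList p))]
  calc ∑ j ∈ Finset.Icc 1 i, j * (∑ k ∈ Finset.Icc (j + 1) (i + 1), dOf i (partsList p) k)
      = ∑ j ∈ Finset.Icc 1 i, j * (partsList p).getD j 0 := by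
        apply Finset.sum_congr rfl
        intro j hj
        rw [Finset.mem_Icc] at hj
        rw [show (∑ k ∈ Finset.Icc (j + 1) (i + 1), dOf i (partsList p) k)
            = gFun i (dOf i (partsList p)) j from rfl, gFun_dOf p hb j hj.1]
    _ = i := bump_eq_Icc p hb

lemma psi_spec (n i : ℕ) (hn : 1 ≤ n) (h2i : 2 * i ≤ n) (d : ℕ → ℕ)
    (hw : ∑ k ∈ Finset.Icc 2 (i + 1), k.choose 2 * d k = i) :
    ∃ p : n.Partition, bumpOfParts (partsList p) = i ∧
      ∀ j, 1 ≤ j → (partsList p).getD j 0 = gFun i d j := by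
  set g := gFun i d with hg
  have hjg : ∑ j ∈ Finset.Icc 1 i, j * g j = i := by
    exact (swap_sum i i (le_refl i) d).trans hw
  have hs : ∑ j ∈ Finset.Icc 1 i, g j ≤ i := by
    calc ∑ j ∈ Finset.Icc 1 i, g j ≤ ∑ j ∈ Finset.Icc 1 i, j * g j := by
          apply Finset.sum_le_sum
          intro j hj
          rw [Finset.mem_Icc] at hj
          exact Nat.le_mul_of_pos_left _ (by omega)
      _ = i := hjg
  set s := ∑ j ∈ Finset.Icc 1 i, g j with hsdef
  set S := (Finset.Icc 1 i).filter (fun j => 0 < g j) with hS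
  set J := S.card with hJ
  have hlow : ∀ j ∈ S, ∀ j', 1 ≤ j' → j' ≤ j → j' ∈ S := by
    intro j hj j' h1 h2
    rw [hS, Finset.mem_filter, Finset.mem_Icc] at *
    refine ⟨⟨h1, le_trans h2 hj.1.2⟩, lt_of_lt_of_le hj.2 (gFun_anti i d h2)⟩
  have hSeq : S = Finset.Icc 1 J := by
    apply Finset.Subset.antisymm
    · intro j hj
      have hsub : Finset.Icc 1 j ⊆ S := by
        intro x hx
        rw [Finset.mem_Icc] at hx
        exact hlow j hj x hx.1 hx.2
      have := Finset.card_le_card hsub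
      rw [Nat.card_Icc] at this
      have h1j : 1 ≤ j := by
        rw [hS, Finset.mem_filter, Finset.mem_Icc] at hj; exact hj.1.1
      rw [Finset.mem_Icc]
      exact ⟨h1j, by omega⟩
    · intro j hj
      rw [Finset.mem_Icc] at hj
      by_contra hjS
      have hlt : ∀ x ∈ S, x < j := by
        intro x hx
        by_contra hxj
        exact hjS (hlow x hx j hj.1 (le_of_not_gt hxj))
      have hsub : S ⊆ Finset.Icc 1 (j - 1) := by
        intro x hx
        have h1x : 1 ≤ x := by
          rw [hS, Finset.mem_filter, Finset.mem_Icc] at hx; exact hx.1.1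
        rw [Finset.mem_Icc]
        exact ⟨h1x, by have := hlt x hx; omega⟩
      have := Finset.card_le_card hsub
      rw [Nat.card_Icc] at this
      omega
  have hJi : J ≤ i := by
    have : S ⊆ Finset.Icc 1 i := Finset.filter_subset _ _
    have := Finset.card_le_card this
    rw [Nat.card_Icc] at this
    omega
  have hseg : ∀ j, 1 ≤ j → (0 < g j ↔ j ≤ J) := by
    intro j h1
    by_cases hji : j ≤ i
    · constructor
      · intro hpos
        have : j ∈ S := by rw [hS, Finset.mem_filter, Finset.mem_Icc]; exact ⟨⟨h1, hji⟩, hpos⟩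
        rw [hSeq, Finset.mem_Icc] at this; exact this.2
      · intro hjJ
        have : j ∈ S := by rw [hSeq, Finset.mem_Icc]; exact ⟨h1, hjJ⟩
        rw [hS, Finset.mem_filter] at this; exact this.2
    · rw [hg, gFun_zero i d (by omega)]
      constructor
      · intro h; exact absurd h (lt_irrefl 0)
      · intro h; omega
  set T := (List.range J).map (fun j => g (j + 1)) with hT
  have hTsum : T.sum = s := by
    rw [hT]
    show ∑ j ∈ Finset.range J, g (j + 1) = s
    have h1 : ∑ j ∈ Finset.range J, g (j + 1) = ∑ j ∈ Finset.Icc 1 J, g j := by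
      rw [show Finset.Icc 1 J = Finset.Ico 1 (J + 1) by rw [Finset.Ico_add_one_right_eq_Icc],
        Finset.sum_Ico_eq_sum_range]
      simp only [Nat.add_sub_cancel]
      apply Finset.sum_congr rfl
      intro x _
      rw [Nat.add_comm]
    rw [h1, hsdef]
    apply Finset.sum_subset (Finset.Icc_subset_Icc_right hJi)
    intro x hx hxn
    rw [Finset.mem_Icc] at hx hxn
    have : ¬ (0 < g x) := by
      rw [hseg x hx.1]; omega
    omega
  have hg1 : g 1 ≤ i := by
    rcases Nat.eq_zero_or_pos i with rfl | hi
    · rw [hg, gFun_zero 0 d (by omega)]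
    · have := Finset.single_le_sum (f := fun j => j * g j)
        (fun _ _ => Nat.zero_le _) (Finset.mem_Icc.2 ⟨le_refl 1, hi⟩)
      rw [hjg] at this
      simpa using this
  have hga : ∀ j, 1 ≤ j → g j ≤ i := fun j hj => le_trans (gFun_anti i d hj) hg1
  have hpos : ∀ {x : ℕ}, x ∈ ((n - s) ::ₘ (T : Multiset ℕ)) → 0 < x := by
    intro x hx
    rw [Multiset.mem_cons] at hx
    rcases hx with rfl | hx
    · omega
    · rw [Multiset.mem_coe, hT, List.mem_map] at hx
      obtain ⟨j, hj, rfl⟩ := hx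
      rw [List.mem_range] at hj
      rw [hseg (j + 1) (by omega)]
      omega
  have hsum : ((n - s) ::ₘ (T : Multiset ℕ)).sum = n := by
    rw [Multiset.sum_cons, Multiset.sum_coe, hTsum]
    omega
  set p : n.Partition := ⟨(n - s) ::ₘ (T : Multiset ℕ), hpos, hsum⟩ with hp
  have hplist : partsList p = (n - s) :: T := by
    apply partsList_eq
    · rw [List.pairwise_cons]
      constructor
      · intro b hb
        rw [hT, List.mem_map] at hb
        obtain ⟨j, hj, rfl⟩ := hb
        have : g (j + 1) ≤ i := hga (j + 1) (by omega)
        omega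
      · rw [hT, List.pairwise_map]
        apply List.Pairwise.imp ?_ (List.pairwise_lt_range (n := J))
        intro a b hab
        exact gFun_anti i d (by omega)
    · rw [← Multiset.cons_coe]
  have hgetD : ∀ j, 1 ≤ j → (partsList p).getD j 0 = g j := by
    intro j hj
    rw [hplist]
    cases j with
    | zero => omega
    | succ m =>
      rw [List.getD_cons_succ]
      by_cases hm : m < J
      · rw [List.getD_eq_getElem _ _ (by simp [hT, hm])]
        simp [hT]
      · rw [List.getD_eq_default _ _ (by simp [hT]; omega)]
        have : ¬ 0 < g (m + 1) := by rw [hseg (m + 1) (by omega)]; omega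
        omega
  have hlen : (partsList p).length = J + 1 := by rw [hplist]; simp [hT]
  have hbump : bumpOfParts (partsList p) = i := by
    rw [bumpOfParts_eq_sum (N := i + 1) (by rw [hlen]; omega)]
    rw [sum_range_one_to i _ (by simp)]
    refine Eq.trans ?_ hjg
    apply Finset.sum_congr rfl
    intro j hj
    rw [Finset.mem_Icc] at hj
    rw [hgetD j hj.1]
  exact ⟨p, hbump, fun j hj => hgetD j hj⟩

lemma part_ext {n : ℕ} (p q : n.Partition)
    (h : ∀ j, 1 ≤ j → (partsList p).getD j 0 = (partsList q).getD j 0) : p = q := by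
  apply partsList_inj
  have hN : ∃ N, (partsList p).length ≤ N + 1 ∧ (partsList q).length ≤ N + 1 :=
    ⟨max (partsList p).length (partsList q).length, by omega, by omega⟩
  obtain ⟨N, hNp, hNq⟩ := hN
  have hsump := sum_eq_getD (partsList p) (N + 1) hNp
  have hsumq := sum_eq_getD (partsList q) (N + 1) hNq
  rw [partsList_sum] at hsump hsumq
  rw [Finset.sum_range_succ'] at hsump hsumq
  have htails : ∑ j ∈ Finset.range N, (partsList p).getD (j + 1) 0
      = ∑ j ∈ Finset.range N, (partsList q).getD (j + 1) 0 :=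
    Finset.sum_congr rfl (fun j _ => h (j + 1) (by omega))
  have h0 : (partsList p).getD 0 0 = (partsList q).getD 0 0 := by omega
  apply list_ext_getD (partsList_pos p) (partsList_pos q)
  intro j
  cases j with
  | zero => exact h0
  | succ m => exact h (m + 1) (by omega)

/-- The finsupp `k ↦ C(k,2) · (λ_{k-1} - λ_k)` associated to a partition. -/
noncomputable def lOf (i : ℕ) {n : ℕ} (p : n.Partition) : ℕ →₀ ℕ :=
  Finsupp.onFinset (Finset.Icc 2 (i + 1))
    (fun k => k.choose 2 * dOf i (partsList p) k)
    (by
      intro k hk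
      rw [Finset.mem_Icc]
      by_contra hc
      simp only [dOf, if_neg (show ¬(2 ≤ k ∧ k ≤ i + 1) by omega), Nat.mul_zero] at hk
      exact hk rfl)

lemma lOf_apply (i : ℕ) {n : ℕ} (p : n.Partition) (k : ℕ) :
    lOf i p k = k.choose 2 * dOf i (partsList p) k := rfl

lemma choose_two_gt (i k : ℕ) (hk : i + 2 ≤ k) : i < k.choose 2 := by
  have h1 : (i + 2).choose 2 ≤ k.choose 2 := Nat.choose_le_choose 2 hk
  have h2 : (i + 2).choose 2 = (i + 2) * (i + 1) / 2 := by
    rw [Nat.choose_two_right]; simp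
  have h3 : (i + 2) * (i + 1) = i * i + 3 * i + 2 := by ring
  omega

lemma count_eq (n i K : ℕ) (hn : 1 ≤ n) (h2i : 2 * i ≤ n) (hK : i + 2 ≤ K) :
    tStat n i = ((Finset.finsuppAntidiag (Finset.Icc 2 K) i).filter
      (fun l : ℕ →₀ ℕ => ∀ k ∈ Finset.Icc 2 K, k.choose 2 ∣ l k)).card := by
  have hIccsub : Finset.Icc 2 (i + 1) ⊆ Finset.Icc 2 K :=
    Finset.Icc_subset_Icc_right (by omega)
  rw [tStat, Nat.card_eq_fintype_card, Fintype.card_subtype]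
  apply Finset.card_bij (fun p _ => lOf i p)
  · -- maps into
    intro p hp
    rw [Finset.mem_filter] at hp
    have hbump := hp.2
    rw [Finset.mem_filter]
    constructor
    · rw [Finset.mem_finsuppAntidiag]
      constructor
      · refine Eq.trans ?_ (weight_dOf p hbump)
        rw [show (Finset.Icc 2 K).sum ⇑(lOf i p)
            = ∑ k ∈ Finset.Icc 2 K, k.choose 2 * dOf i (partsList p) k from
          Finset.sum_congr rfl (fun k _ => lOf_apply i p k)]
        symm
        apply Finset.sum_subset hIccsub
        intro k _ hk2
        rw [Finset.mem_Icc] at hk2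
        rw [dOf]
        by_cases h2k : 2 ≤ k
        · rw [if_neg (by omega)]; ring
        · rw [if_neg (by omega)]; ring
      · exact subset_trans (Finsupp.support_onFinset_subset) hIccsub
    · intro k _
      exact Dvd.intro _ rfl
  · -- injective
    intro p hp q hq heq
    rw [Finset.mem_filter] at hp hq
    apply part_ext
    intro j hj
    rw [← gFun_dOf p hp.2 j hj, ← gFun_dOf q hq.2 j hj]
    apply Finset.sum_congr rfl
    intro k hk
    rw [Finset.mem_Icc] at hk
    have h2k : 2 ≤ k := by omega
    have hck : 0 < k.choose 2 := Nat.choose_pos h2k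
    have h5 := DFunLike.congr_fun heq k
    rw [lOf_apply, lOf_apply] at h5
    exact Nat.eq_of_mul_eq_mul_left hck h5
  · -- surjective
    intro l hl
    rw [Finset.mem_filter, Finset.mem_finsuppAntidiag] at hl
    obtain ⟨⟨hsum, hsupp⟩, hdvd⟩ := hl
    have hzero : ∀ k, i + 1 < k → l k = 0 := by
      intro k hik
      by_cases hkmem : k ∈ Finset.Icc 2 K
      · by_contra hlk
        have hpos : 0 < l k := Nat.pos_of_ne_zero hlk
        have hle : l k ≤ i := by
          rw [← hsum]
          exact Finset.single_le_sum (fun _ _ => Nat.zero_le _) hkmem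
        have hck : k.choose 2 ≤ l k := Nat.le_of_dvd hpos (hdvd k hkmem)
        have := choose_two_gt i k (by rw [Finset.mem_Icc] at hkmem; omega)
        omega
      · by_contra hlk
        exact hkmem (hsupp (Finsupp.mem_support_iff.2 hlk))
    set d : ℕ → ℕ := fun k => l k / k.choose 2 with hd
    have hld : ∀ k ∈ Finset.Icc 2 (i + 1), k.choose 2 * d k = l k := by
      intro k hk
      rw [Finset.mem_Icc] at hk
      exact Nat.mul_div_cancel' (hdvd k (hIccsub (Finset.mem_Icc.2 hk)))
    have hw : ∑ k ∈ Finset.Icc 2 (i + 1), k.choose 2 * d k = i := by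
      rw [Finset.sum_congr rfl hld]
      refine Eq.trans ?_ hsum
      apply Finset.sum_subset hIccsub
      intro k hk1 hk2
      rw [Finset.mem_Icc] at hk1 hk2
      exact hzero k (by omega)
    obtain ⟨p, hbump, hgspec⟩ := psi_spec n i hn h2i d hw
    refine ⟨p, Finset.mem_filter.2 ⟨Finset.mem_univ _, hbump⟩, ?_⟩
    ext k
    rw [lOf_apply, dOf]
    by_cases hk : 2 ≤ k ∧ k ≤ i + 1
    · rw [if_pos hk]
      have hk1 : (1:ℕ) ≤ k - 1 := by omega
      rw [hgspec (k - 1) hk1, hgspec k (by omega), gFun_diff i d hk.1 hk.2,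
        Nat.add_sub_cancel]
      exact hld k (Finset.mem_Icc.2 hk)
    · rw [if_neg hk, Nat.mul_zero]
      symm
      by_cases h2k : 2 ≤ k
      · exact hzero k (by omega)
      · by_contra hlk
        have := hsupp (Finsupp.mem_support_iff.2 hlk)
        rw [Finset.mem_Icc] at this
        omega

open PowerSeries in
noncomputable def geom (c : ℕ) : PowerSeries ℚ :=
  PowerSeries.mk fun m => if c ∣ m then 1 else 0

open PowerSeries in
lemma geom_inv (c : ℕ) (hc : 0 < c) :
    (1 - (PowerSeries.X : PowerSeries ℚ) ^ c) * geom c = 1 := by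
  have hr : (1 - (PowerSeries.X : PowerSeries ℚ) ^ c) * geom c
      = geom c - PowerSeries.X ^ c * geom c := by ring
  rw [hr]
  ext m
  rw [map_sub, PowerSeries.coeff_X_pow_mul']
  rcases le_or_gt c m with h | h
  · rw [if_pos h]
    simp only [geom, PowerSeries.coeff_mk, PowerSeries.coeff_one]
    have hmne : m ≠ 0 := by omega
    rw [if_neg hmne]
    have hiff : c ∣ m ↔ c ∣ m - c := by
      constructor
      · intro hd; exact (Nat.dvd_sub hd dvd_rfl)
      · intro hd; have := Nat.dvd_add hd (dvd_refl c); rwa [Nat.sub_add_cancel h] at this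
    split_ifs with h1 h2 h3
    · ring
    · exact absurd (hiff.1 h1) h2
    · exact absurd (hiff.2 h3) h1
    · ring
  · rw [if_neg (by omega)]
    simp only [geom, PowerSeries.coeff_mk, PowerSeries.coeff_one]
    rcases Nat.eq_zero_or_pos m with rfl | hm
    · rw [if_pos (dvd_zero c), if_pos rfl]; ring
    · rw [if_neg (fun hd => by have := Nat.le_of_dvd hm hd; omega), if_neg (by omega)]
      ring

open PowerSeries in
lemma F_eq (K : ℕ) (F : PowerSeries ℚ)
    (hF : F * ∏ k ∈ Finset.Icc 2 K,
      (1 - (PowerSeries.X : PowerSeries ℚ) ^ k.choose 2) = 1) :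
    F = ∏ k ∈ Finset.Icc 2 K, geom (k.choose 2) := by
  have hPG : (∏ k ∈ Finset.Icc 2 K, (1 - (PowerSeries.X : PowerSeries ℚ) ^ k.choose 2))
      * (∏ k ∈ Finset.Icc 2 K, geom (k.choose 2)) = 1 := by
    rw [← Finset.prod_mul_distrib]
    apply Finset.prod_eq_one
    intro k hk
    rw [Finset.mem_Icc] at hk
    exact geom_inv _ (Nat.choose_pos hk.1)
  calc F = F * ((∏ k ∈ Finset.Icc 2 K, (1 - (PowerSeries.X : PowerSeries ℚ) ^ k.choose 2))
        * (∏ k ∈ Finset.Icc 2 K, geom (k.choose 2))) := by rw [hPG, mul_one]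
    _ = (F * ∏ k ∈ Finset.Icc 2 K, (1 - (PowerSeries.X : PowerSeries ℚ) ^ k.choose 2))
        * (∏ k ∈ Finset.Icc 2 K, geom (k.choose 2)) := by ring
    _ = ∏ k ∈ Finset.Icc 2 K, geom (k.choose 2) := by rw [hF, one_mul]

open PowerSeries in
lemma coeff_F (K i : ℕ) (F : PowerSeries ℚ)
    (hF : F * ∏ k ∈ Finset.Icc 2 K,
      (1 - (PowerSeries.X : PowerSeries ℚ) ^ k.choose 2) = 1) :
    PowerSeries.coeff (R := ℚ) i F
      = (((Finset.finsuppAntidiag (Finset.Icc 2 K) i).filter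
          (fun l : ℕ →₀ ℕ => ∀ k ∈ Finset.Icc 2 K, k.choose 2 ∣ l k)).card : ℚ) := by
  rw [F_eq K F hF, PowerSeries.coeff_prod]
  have h1 : ∀ l : ℕ →₀ ℕ, l ∈ Finset.finsuppAntidiag (Finset.Icc 2 K) i →
      (∏ k ∈ Finset.Icc 2 K, PowerSeries.coeff (R := ℚ) (l k) (geom (k.choose 2)))
      = if (∀ k ∈ Finset.Icc 2 K, k.choose 2 ∣ l k) then (1:ℚ) else 0 := by
    intro l _
    simp only [geom, PowerSeries.coeff_mk]
    exact Finset.prod_boole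
  rw [Finset.sum_congr rfl h1, Finset.sum_boole]

lemma bump_partition_zero (p : Nat.Partition 0) : bumpOfParts (partsList p) = 0 := by
  have hparts : p.parts = 0 := by
    rw [Multiset.eq_zero_iff_forall_notMem]
    intro x hx
    have h1 := p.parts_pos hx
    have h2 := p.parts_sum
    have := Multiset.single_le_sum (fun y hy => Nat.zero_le y) x hx
    omega
  have : partsList p = [] := by
    have := partsList_coe p
    rw [hparts, Multiset.coe_eq_zero] at this
    exact this
  rw [this]
  rfl


open PowerSeries in
/-- `t_{n+j,n} ≤ t_{n+j+1,n}` for all `n, j ≥ 0`; and for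
`0 ≤ i ≤ ⌊n/2⌋`, `t_{n,i}` is the coefficient of `zⁱ` in `∏_{k≥2} 1/(1 - z^{C(k,2)})`
(the infinite product read through any sufficiently large truncation, which does not
affect the coefficient of `zⁱ`; in particular `t_{n,i}` is independent of `n`). -/
theorem tStat_monotone_and_stable :
    (∀ n j : ℕ, tStat (n + j) n ≤ tStat (n + j + 1) n) ∧
    (∀ n i : ℕ, i ≤ n / 2 →
      ∀ K : ℕ, i + 2 ≤ K → ∀ F : PowerSeries ℚ,
        F * ∏ k ∈ Finset.Icc 2 K,
            (1 - (PowerSeries.X : PowerSeries ℚ) ^ k.choose 2) = 1 →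
        (tStat n i : ℚ) = PowerSeries.coeff (R := ℚ) i F) := by
  constructor
  · exact part1
  · intro n i hi K hK F hF
    rcases Nat.eq_zero_or_pos n with rfl | hn
    · have hi0 : i = 0 := by omega
      subst hi0
      have hcard : tStat 0 0 = 1 := by
        rw [tStat]
        haveI : Unique {p : Nat.Partition 0 // bumpOfParts (partsList p) = 0} :=
          { default := ⟨default, bump_partition_zero _⟩
            uniq := fun x => Subtype.ext (Subsingleton.elim _ _) }
        exact Nat.card_unique
      rw [hcard]
      have hcc := congrArg (PowerSeries.constantCoeff (R := ℚ)) hF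
      rw [map_mul, map_prod] at hcc
      have hone : ∀ k ∈ Finset.Icc 2 K,
          PowerSeries.constantCoeff (R := ℚ) (1 - (PowerSeries.X : PowerSeries ℚ) ^ k.choose 2)
            = 1 := by
        intro k hk
        rw [Finset.mem_Icc] at hk
        rw [map_sub, map_one, map_pow, PowerSeries.constantCoeff_X,
          zero_pow (Nat.pos_iff_ne_zero.1 (Nat.choose_pos hk.1)), sub_zero]
      rw [Finset.prod_congr rfl hone, Finset.prod_const_one, mul_one, map_one] at hcc
      rw [PowerSeries.coeff_zero_eq_constantCoeff, hcc]
      norm_num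
    · rw [count_eq n i K hn (by omega) hK, coeff_F K i F hF]
end
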